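/- arXiv:2204.11225 — 3 statements merged into one kernel-verified Lean document; each statement's English description precedes it below -/
import Mathlib

section
/- Let f : ℝⁿ → ℝⁿ be continuously differentiable, let y* be an equilibrium point of the autonomous system dy/dt = f(y) (i.e. f(y*) = 0), and suppose V : ℝⁿ → ℝ is continuously differentiable on a neighbourhood B of y* and satisfies: (a) V(y*) = 0 and V(y) > 0 for all y ∈ B with y ≠ y*, and (b) ∇V(y) · f(y) < 0 for all y ∈ B with y ≠ y*. Then y* is asymptotically stable: it is Lyapunov stable and there is a neighbourhood of y* such that every solution starting in it converges to y* as t → ∞. -/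
open Metric Set Filter

/-- **Lyapunov's theorem on asymptotic stability.**
If `f : ℝⁿ → ℝⁿ` is `C¹`, `y*` is an equilibrium (`f y* = 0`), and `V` is a `C¹`
strict Lyapunov function on a neighbourhood `B` of `y*` (positive away from `y*`,
vanishing at `y*`, with `∇V · f < 0` away from `y*`), then `y*` is asymptotically
stable: it is Lyapunov stable and solutions starting near `y*` converge to `y*`. -/
theorem lyapunov_asymptotic_stability
    {n : ℕ} (f : EuclideanSpace ℝ (Fin n) → EuclideanSpace ℝ (Fin n))
    (hf : ContDiff ℝ 1 f)
    (ystar : EuclideanSpace ℝ (Fin n)) (hfix : f ystar = 0)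
    (B : Set (EuclideanSpace ℝ (Fin n))) (hB : B ∈ nhds ystar)
    (V : EuclideanSpace ℝ (Fin n) → ℝ) (hV : ContDiffOn ℝ 1 V B)
    (hV0 : V ystar = 0)
    (hVpos : ∀ y ∈ B, y ≠ ystar → 0 < V y)
    (hVdec : ∀ y ∈ B, y ≠ ystar → inner ℝ (gradient V y) (f y) < (0 : ℝ)) :
    (∀ U ∈ nhds ystar, ∃ W ∈ nhds ystar,
      ∀ y : ℝ → EuclideanSpace ℝ (Fin n),
        (∀ t, HasDerivAt y (f (y t)) t) → y 0 ∈ W → ∀ t ≥ (0 : ℝ), y t ∈ U) ∧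
    (∃ N ∈ nhds ystar,
      ∀ y : ℝ → EuclideanSpace ℝ (Fin n),
        (∀ t, HasDerivAt y (f (y t)) t) → y 0 ∈ N →
          Filter.Tendsto y Filter.atTop (nhds ystar)) := by
  classical
  rcases subsingleton_or_nontrivial (EuclideanSpace ℝ (Fin n)) with hsub | hnt
  · constructor
    · intro U hU
      refine ⟨U, hU, fun y _ h0 t _ => ?_⟩
      rwa [Subsingleton.elim (y t) (y 0)]
    · refine ⟨Set.univ, univ_mem, fun y _ _ => ?_⟩
      have : y = fun _ => ystar := funext fun t => Subsingleton.elim _ _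
      rw [this]; exact tendsto_const_nhds
  -- main case
  set O := interior B with hO_def
  have hOopen : IsOpen O := isOpen_interior
  have hOB : O ⊆ B := interior_subset
  have hyO : ystar ∈ O := mem_interior_iff_mem_nhds.2 hB
  -- differentiability facts
  have hVd : ∀ x ∈ O, DifferentiableAt ℝ V x := fun x hx =>
    ((hV.contDiffAt (Filter.mem_of_superset (hOopen.mem_nhds hx) hOB)).differentiableAt one_ne_zero)
  set D : EuclideanSpace ℝ (Fin n) → ℝ := fun x => fderiv ℝ V x (f x) with hD_def
  have hDeq : ∀ x, inner ℝ (gradient V x) (f x) = D x := fun x =>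
    InnerProductSpace.toDual_symm_apply
  have hDneg : ∀ x ∈ O, x ≠ ystar → D x < 0 := fun x hx hne => by
    rw [← hDeq]; exact hVdec x (hOB hx) hne
  have hDnonpos : ∀ x ∈ O, D x ≤ 0 := by
    intro x hx
    rcases eq_or_ne x ystar with rfl | hne
    · simp [hD_def, hfix]
    · exact (hDneg x hx hne).le
  have hDcont : ContinuousOn D O := by
    have h1 : ContinuousOn (fderiv ℝ V) O :=
      ((hV.mono hOB).continuousOn_fderiv_of_isOpen hOopen le_rfl)
    exact h1.clm_apply hf.continuous.continuousOn
  have hVcont : ContinuousOn V B := hV.continuousOn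
  have hVnonneg : ∀ x ∈ B, 0 ≤ V x := by
    intro x hx
    rcases eq_or_ne x ystar with rfl | hne
    · simp [hV0]
    · exact (hVpos x hx hne).le
  -- chain rule
  have hchain : ∀ (y : ℝ → EuclideanSpace ℝ (Fin n)),
      (∀ t, HasDerivAt y (f (y t)) t) → ∀ t : ℝ, y t ∈ O →
      HasDerivAt (fun s => V (y s)) (D (y t)) t := by
    intro y hy t ht
    exact (hVd _ ht).hasFDerivAt.comp_hasDerivAt t (hy t)
  -- monotonicity along trajectories
  have hmono : ∀ (y : ℝ → EuclideanSpace ℝ (Fin n)),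
      (∀ t, HasDerivAt y (f (y t)) t) → ∀ s : Set ℝ, Convex ℝ s →
      (∀ t ∈ s, y t ∈ O) → AntitoneOn (fun t => V (y t)) s := by
    intro y hy s hs hin
    apply antitoneOn_of_deriv_nonpos hs
    · exact fun t ht => (hchain y hy t (hin t ht)).continuousAt.continuousWithinAt
    · exact fun t ht =>
        (hchain y hy t (hin t (interior_subset ht))).differentiableAt.differentiableWithinAt
    · intro t ht
      rw [(hchain y hy t (hin t (interior_subset ht))).deriv]
      exact hDnonpos _ (hin t (interior_subset ht))
  -- trapping lemma
  have trap : ∀ ε > (0:ℝ), closedBall ystar ε ⊆ O → ∀ m : ℝ,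
      (∀ x ∈ sphere ystar ε, m ≤ V x) →
      ∀ y : ℝ → EuclideanSpace ℝ (Fin n), (∀ t, HasDerivAt y (f (y t)) t) →
      y 0 ∈ ball ystar ε → V (y 0) < m → ∀ t ≥ (0:ℝ), y t ∈ ball ystar ε := by
    intro ε hε hsub m hm y hy h0 hV0'
    by_contra hcon
    push_neg at hcon
    obtain ⟨t₀, ht₀, hout⟩ := hcon
    have hyc : Continuous y := continuous_iff_continuousAt.2 fun t => (hy t).continuousAt
    set E : Set ℝ := Ici 0 ∩ (fun t => dist (y t) ystar) ⁻¹' Ici ε with hE_def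
    have hEclosed : IsClosed E :=
      isClosed_Ici.inter (isClosed_Ici.preimage ((hyc.dist continuous_const)))
    have ht₀E : t₀ ∈ E := ⟨ht₀, not_lt.1 fun hc => hout (mem_ball.2 hc)⟩
    have hEbdd : BddBelow E := ⟨0, fun t ht => ht.1⟩
    set τ := sInf E with hτ_def
    have hτE : τ ∈ E := hEclosed.csInf_mem ⟨t₀, ht₀E⟩ hEbdd
    have hτ0 : 0 ≤ τ := hτE.1
    have hτpos : 0 < τ := by
      rcases eq_or_lt_of_le hτ0 with h | h
      · exfalso
        have : ε ≤ dist (y 0) ystar := by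
          have := hτE.2; rw [← h] at this; exact this
        exact absurd (mem_ball.1 h0) (not_lt.2 this)
      · exact h
    have hlt : ∀ s ∈ Ico (0:ℝ) τ, dist (y s) ystar < ε := by
      intro s hs
      by_contra hc
      exact absurd (csInf_le hEbdd ⟨hs.1, not_lt.1 hc⟩) (not_le.2 hs.2)
    have hτball : dist (y τ) ystar ≤ ε := by
      have htend : Tendsto (fun s => dist (y s) ystar) (nhdsWithin τ (Iio τ))
          (nhds (dist (y τ) ystar)) :=
        ((hyc.dist continuous_const).continuousAt).mono_left nhdsWithin_le_nhds
      refine le_of_tendsto htend ?_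
      filter_upwards [Ioo_mem_nhdsLT_of_mem (Set.mem_Ioc.2 ⟨hτpos, le_rfl⟩)] with s hs
      exact (hlt s ⟨hs.1.le, hs.2⟩).le
    have hIcc : ∀ s ∈ Icc (0:ℝ) τ, y s ∈ closedBall ystar ε := by
      intro s hs
      rcases eq_or_lt_of_le hs.2 with rfl | h'
      · exact mem_closedBall.2 hτball
      · exact mem_closedBall.2 (hlt s ⟨hs.1, h'⟩).le
    have hanti := hmono y hy (Icc 0 τ) (convex_Icc _ _) (fun s hs => hsub (hIcc s hs))
    have h1 : V (y τ) ≤ V (y 0) :=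
      hanti ⟨le_rfl, hτ0⟩ ⟨hτ0, le_rfl⟩ hτ0
    have h2 : m ≤ V (y τ) := hm _ (by
      rw [mem_sphere]; exact le_antisymm hτball hτE.2)
    linarith
  -- a good neighbourhood for any target neighbourhood
  have goodW : ∀ U ∈ nhds ystar, ∃ ε > (0:ℝ), ∃ m > (0:ℝ), ∃ W ∈ nhds ystar,
      closedBall ystar ε ⊆ O ∩ U ∧ W ⊆ ball ystar ε ∩ V ⁻¹' Iio m ∧
      (∀ x ∈ sphere ystar ε, m ≤ V x) := by
    intro U hU
    obtain ⟨ε, hε, hsub⟩ := (Metric.nhds_basis_closedBall.mem_iff).1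
      (Filter.inter_mem (hOopen.mem_nhds hyO) hU)
    have hSc : IsCompact (sphere ystar ε) := isCompact_sphere _ _
    have hSne : (sphere ystar ε).Nonempty := NormedSpace.sphere_nonempty.2 hε.le
    have hSB : sphere ystar ε ⊆ B := fun x hx =>
      hOB ((hsub (sphere_subset_closedBall hx)).1)
    obtain ⟨x0, hx0S, hx0min⟩ := hSc.exists_isMinOn hSne (hVcont.mono hSB)
    have hx0ne : x0 ≠ ystar := by
      intro h
      rw [mem_sphere, h] at hx0S
      simp at hx0S
      exact absurd hx0S.symm (ne_of_gt hε)
    have hm : 0 < V x0 := hVpos x0 (hSB hx0S) hx0ne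
    have hWnh : ball ystar ε ∩ V ⁻¹' Iio (V x0) ∈ nhds ystar := by
      refine Filter.inter_mem (ball_mem_nhds _ hε) ?_
      have hca : ContinuousAt V ystar := hVcont.continuousAt hB
      exact hca.preimage_mem_nhds (by rw [hV0]; exact Iio_mem_nhds hm)
    exact ⟨ε, hε, V x0, hm, _, hWnh, hsub, Set.Subset.rfl, fun x hx => hx0min hx⟩
  constructor
  · -- stability
    intro U hU
    obtain ⟨ε, hε, m, hm, W, hWnh, hsub, hWsub, hmmin⟩ := goodW U hU
    refine ⟨W, hWnh, fun y hy h0 t ht => ?_⟩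
    have h0' := hWsub h0
    have := trap ε hε (fun x hx => (hsub hx).1) m hmmin y hy h0'.1 h0'.2
    exact (hsub (ball_subset_closedBall (this t ht))).2
  · -- asymptotic stability
    obtain ⟨ε, hε, m, hm, W, hWnh, hsub, hWsub, hmmin⟩ := goodW Set.univ univ_mem
    have hballO : closedBall ystar ε ⊆ O := fun x hx => (hsub hx).1
    refine ⟨W, hWnh, fun y hy h0 => ?_⟩
    have h0' := hWsub h0
    have hball : ∀ t ≥ (0:ℝ), y t ∈ ball ystar ε :=
      trap ε hε hballO m hmmin y hy h0'.1 h0'.2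
    have hO' : ∀ t ≥ (0:ℝ), y t ∈ O := fun t ht =>
      hballO (ball_subset_closedBall (hball t ht))
    set g : ℝ → ℝ := fun t => V (y t) with hg_def
    have gmono : AntitoneOn g (Ici 0) :=
      hmono y hy (Ici 0) (convex_Ici 0) (fun t ht => hO' t ht)
    set h : ℝ → ℝ := fun t => g (max t 0) with hh_def
    have hanti : Antitone h := fun s t hst =>
      gmono (le_max_right s 0) (le_max_right t 0) (max_le_max hst le_rfl)
    have hnn : ∀ t, 0 ≤ h t := fun t =>
      hVnonneg _ (hOB (hO' _ (le_max_right t 0)))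
    have hbdd : BddBelow (Set.range h) := ⟨0, fun v ⟨t, htv⟩ => htv ▸ hnn t⟩
    set c := ⨅ t, h t with hc_def
    have hhc : Tendsto h atTop (nhds c) := tendsto_atTop_ciInf hanti hbdd
    have hgc : Tendsto g atTop (nhds c) := by
      refine hhc.congr' ?_
      filter_upwards [eventually_ge_atTop (0:ℝ)] with t ht
      simp [hh_def, max_eq_left ht]
    have hc0 : 0 ≤ c := le_ciInf hnn
    have hge : ∀ t, c ≤ h t := fun t => ciInf_le hbdd t
    have hge' : ∀ t ≥ (0:ℝ), c ≤ g t := by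
      intro t ht
      simpa [hh_def, max_eq_left ht] using hge t
    -- c = 0
    have hceq : c = 0 := by
      by_contra hne
      have hcpos : 0 < c := lt_of_le_of_ne hc0 (Ne.symm hne)
      set K := closedBall ystar ε ∩ V ⁻¹' Ici c with hK_def
      have hKclosed : IsClosed K :=
        (hVcont.mono fun x hx => hOB (hballO hx)).preimage_isClosed_of_isClosed
          isClosed_closedBall isClosed_Ici
      have hKc : IsCompact K :=
        (isCompact_closedBall _ _).of_isClosed_subset hKclosed inter_subset_left
      have hKO : K ⊆ O := fun x hx => hballO hx.1
      have hKne : K.Nonempty :=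
        ⟨y 0, ball_subset_closedBall (hball 0 le_rfl), hge' 0 le_rfl⟩
      obtain ⟨x1, hx1K, hx1max⟩ := hKc.exists_isMaxOn hKne (hDcont.mono hKO)
      have hx1ne : x1 ≠ ystar := by
        intro hcontra
        have : c ≤ V ystar := hcontra ▸ hx1K.2
        rw [hV0] at this
        exact absurd hcpos (not_lt.2 this)
      have hκpos : 0 < -D x1 := by
        have := hDneg x1 (hKO hx1K) hx1ne
        linarith
      set κ := -D x1 with hκ_def
      have hinK : ∀ t ≥ (0:ℝ), y t ∈ K := fun t ht =>
        ⟨ball_subset_closedBall (hball t ht), hge' t ht⟩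
      -- linear decay
      have hdecay : AntitoneOn (fun t => g t + κ * t) (Ici 0) := by
        have hder : ∀ t ≥ (0:ℝ), HasDerivAt (fun s => g s + κ * s) (D (y t) + κ) t := by
          intro t ht
          exact (hchain y hy t (hO' t ht)).add
            ((hasDerivAt_id t).const_mul κ |>.congr_deriv (by ring))
        apply antitoneOn_of_deriv_nonpos (convex_Ici 0)
        · exact fun t ht => (hder t ht).continuousAt.continuousWithinAt
        · intro t ht
          rw [interior_Ici] at ht
          exact (hder t ht.le).differentiableAt.differentiableWithinAt
        · intro t ht
          rw [interior_Ici] at ht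
          rw [(hder t ht.le).deriv]
          have hDle : D (y t) ≤ D x1 := hx1max (hinK t ht.le)
          rw [hκ_def]; linarith
      -- contradiction
      set T := (g 0 - c + 1) / κ with hT_def
      have hT0 : 0 < T := div_pos (by have := hge' 0 le_rfl; linarith) hκpos
      have h1 : g T + κ * T ≤ g 0 + κ * 0 :=
        hdecay (self_mem_Ici) (le_of_lt hT0) hT0.le
      have h2 : c ≤ g T := hge' T hT0.le
      have h3 : κ * T = g 0 - c + 1 := by
        rw [hT_def]; field_simp
      linarith
    rw [hceq] at hgc
    -- convergence
    rw [Metric.tendsto_atTop]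
    intro δ hδ
    set δ' := min δ ε with hδ'_def
    have hδ'pos : 0 < δ' := lt_min hδ hε
    set A := closedBall ystar ε ∩ (ball ystar δ')ᶜ with hA_def
    have hAc : IsCompact A :=
      (isCompact_closedBall _ _).inter_right isOpen_ball.isClosed_compl
    have hAO : A ⊆ O := fun x hx => hballO hx.1
    have hAne : A.Nonempty := by
      obtain ⟨xs, hxs⟩ := (NormedSpace.sphere_nonempty (x := ystar)).2 hε.le
      refine ⟨xs, sphere_subset_closedBall hxs, ?_⟩
      rw [mem_compl_iff, mem_ball, mem_sphere] at *
      rw [hxs]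
      exact not_lt.2 (min_le_right δ ε)
    obtain ⟨x2, hx2A, hx2min⟩ := hAc.exists_isMinOn hAne (hVcont.mono fun x hx => hOB (hAO hx))
    have hx2ne : x2 ≠ ystar := by
      intro hcontra
      have := hx2A.2
      rw [hcontra, mem_compl_iff, mem_ball, dist_self] at this
      exact this hδ'pos
    have hm2 : 0 < V x2 := hVpos x2 (hOB (hAO hx2A)) hx2ne
    have hev : ∀ᶠ t in atTop, g t < V x2 := hgc.eventually_lt_const hm2
    rw [eventually_atTop] at hev
    obtain ⟨N, hN⟩ := hev
    refine ⟨max N 0, fun t ht => ?_⟩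
    have ht0 : (0:ℝ) ≤ t := le_trans (le_max_right N 0) ht
    have htN : N ≤ t := le_trans (le_max_left N 0) ht
    have hyball : y t ∈ ball ystar δ' := by
      by_contra hc
      have hmem : y t ∈ A := ⟨ball_subset_closedBall (hball t ht0), hc⟩
      exact absurd (hx2min hmem) (not_le.2 (hN t htN))
    exact lt_of_lt_of_le (mem_ball.1 hyball) (min_le_left δ ε)
end

section
/- Let V : ℝⁿ → ℝ, let y, z ∈ ℝⁿ, let h > 0, let L̃ be an n×n real matrix whose symmetric part is negative definite (i.e. vᵀ L̃ v < 0 for every nonzero v ∈ ℝⁿ), and let g ∈ ℝⁿ satisfy the discrete gradient identity g · (z − y) = V(z) − V(y). If z and y satisfy the discrete gradient step z − y = h · L̃ g and z ≠ y, then V(z) < V(y). -/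
open Matrix

/-- **A discrete gradient step strictly decreases the Lyapunov function.**
If `L̃` has negative-definite symmetric part (`vᵀ L̃ v < 0` for `v ≠ 0`), `g` satisfies
the discrete gradient identity `g · (z - y) = V z - V y`, and the step is
`z - y = h • L̃ g` with `h > 0` and `z ≠ y`, then `V z < V y`. -/
theorem discrete_gradient_step_decreases {n : ℕ}
    (V : (Fin n → ℝ) → ℝ) (y z : Fin n → ℝ) (h : ℝ) (hh : 0 < h)
    (L : Matrix (Fin n) (Fin n) ℝ)
    (hL : ∀ v : Fin n → ℝ, v ≠ 0 → v ⬝ᵥ L.mulVec v < 0)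
    (g : Fin n → ℝ)
    (hg : g ⬝ᵥ (z - y) = V z - V y)
    (hstep : z - y = h • L.mulVec g)
    (hzy : z ≠ y) :
    V z < V y := by
  have hg0 : g ≠ 0 := by
    intro hg0
    apply hzy
    have : z - y = 0 := by simp [hstep, hg0, Matrix.mulVec_zero]
    exact sub_eq_zero.mp this
  have key : g ⬝ᵥ (z - y) < 0 := by
    rw [hstep, dotProduct_smul]
    exact mul_neg_of_pos_of_neg hh (hL g hg0)
  linarith [hg ▸ key]
end

section
/- Let a > 0, h > 0, y > 0, let V(y) = (1/2)(1 − y)², and let z = ((1 + a h − (a h/2) y) y) / (1 + (a h/2) y) be the step produced by the explicit discrete gradient method for the logistic equation. Then V(z) ≤ V(y), with strict inequality V(z) < V(y) whenever z ≠ y; indeed V(z) − V(y) = −a h y (1 − (z + y)/2)². -/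
/-- **The explicit discrete gradient step for the logistic equation decreases
`V(y) = (1/2)(1-y)²`.**  With `z = ((1 + a h - (a h/2) y) y)/(1 + (a h/2) y)`:
`V(z) - V(y) = -a h y (1 - (z+y)/2)²`, hence `V(z) ≤ V(y)`, with strict
inequality whenever `z ≠ y`. -/
theorem logistic_discrete_gradient_decreases (a h y : ℝ)
    (ha : 0 < a) (hh : 0 < h) (hy : 0 < y) :
    let V : ℝ → ℝ := fun u => (1 / 2) * (1 - u) ^ 2
    let z : ℝ := ((1 + a * h - (a * h / 2) * y) * y) / (1 + (a * h / 2) * y)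
    (V z - V y = -(a * h * y) * (1 - (z + y) / 2) ^ 2) ∧
    (V z ≤ V y) ∧
    (z ≠ y → V z < V y) := by
  intro V z
  have hd : (0:ℝ) < 1 + (a * h / 2) * y := by positivity
  have hd' : (1 + (a * h / 2) * y) ≠ 0 := ne_of_gt hd
  have key : V z - V y = -(a * h * y) * (1 - (z + y) / 2) ^ 2 := by
    show (1/2) * (1 - z)^2 - (1/2) * (1 - y)^2 = -(a * h * y) * (1 - (z + y) / 2) ^ 2
    simp only [z]
    field_simp
    ring
  refine ⟨key, ?_, ?_⟩
  · nlinarith [sq_nonneg (1 - (z + y) / 2), mul_pos (mul_pos ha hh) hy]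
  · intro hne
    have hzy : 1 - (z + y) / 2 ≠ 0 := by
      intro h0
      apply hne
      have : z = y := by
        have hz : z * (1 + (a*h/2)*y) = (1 + a*h - (a*h/2)*y) * y := by
          simp only [z]; field_simp
        nlinarith [sq_nonneg (z - y)]
      exact this
    nlinarith [sq_pos_of_ne_zero hzy, mul_pos (mul_pos ha hh) hy]
end
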